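/- On the Lie algebra A_{6,54}^{2,1} with structure equations (e^{16}+e^{35}, e^{26}+e^{45}, -e^{36}, -e^{46}, 2e^{56}, 0), the pair F = e^{31} + e^{42} + 2e^{65} and ρ = e^{346} + e^{235} - e^{145} - 2e^{126} satisfies dF = 0, dρ = 0, F^3 ≠ 0, and F∧ρ = 0. -/

import Mathlib

open ExteriorAlgebra

noncomputable section

/-- The exterior algebra Λ*(g*) of a 6-dimensional real Lie algebra g,
    identified with the exterior algebra on ℝ^6. -/
abbrev E6 : Type := ExteriorAlgebra ℝ (Fin 6 → ℝ)

/-- The basis 1-forms e^1, ..., e^6 (0-indexed). -/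
def e (i : Fin 6) : E6 := ι ℝ (Pi.single i 1)

/-- Structure equations: d of the basis 1-forms. -/
def d1 : Fin 6 → E6 :=
  ![e 0 * e 5 + e 2 * e 4,
    e 1 * e 5 + e 3 * e 4,
    -(e 2 * e 5),
    -(e 3 * e 5),
    (2:ℝ) • (e 4 * e 5),
    0]

/-- Leibniz: d(e^i ∧ e^j) = de^i ∧ e^j - e^i ∧ de^j. -/
def d2 (i j : Fin 6) : E6 := d1 i * e j - e i * d1 j

/-- Leibniz: d(e^i ∧ e^j ∧ e^k) = de^i ∧ e^j ∧ e^k - e^i ∧ de^j ∧ e^k + e^i ∧ e^j ∧ de^k. -/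
def d3 (i j k : Fin 6) : E6 := d1 i * e j * e k - e i * d1 j * e k + e i * e j * d1 k

/-- F. -/
def F : E6 := e 2 * e 0 + e 3 * e 1 + (2:ℝ) • (e 5 * e 4)

/-- dF via the Leibniz rule. -/
def dF : E6 := d2 2 0 + d2 3 1 + (2:ℝ) • (d2 5 4)

/-- ρ. -/
def ρ : E6 := e 2 * e 3 * e 5 + e 1 * e 2 * e 4 - e 0 * e 3 * e 4 + (-2:ℝ) • (e 0 * e 1 * e 5)

/-- dρ via the Leibniz rule. -/
def dρ : E6 := d3 2 3 5 + d3 1 2 4 - d3 0 3 4 + (-2:ℝ) • (d3 0 1 5)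

lemma e_sq (i : Fin 6) : e i * e i = 0 := ι_sq_zero _

lemma e_sq' (i : Fin 6) (x : E6) : e i * (e i * x) = 0 := by
  rw [← mul_assoc, e_sq, zero_mul]

lemma e_swap (i j : Fin 6) (_h : j < i) : e i * e j = -(e j * e i) :=
  eq_neg_of_add_eq_zero_right (ι_add_mul_swap _ _)

lemma e_swap' (i j : Fin 6) (_h : j < i) (x : E6) :
    e i * (e j * x) = -(e j * (e i * x)) := by
  rw [← mul_assoc, e_swap i j _h, neg_mul, mul_assoc]


lemma d1_0 : d1 0 = e 0 * e 5 + e 2 * e 4 := rfl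
lemma d1_1 : d1 1 = e 1 * e 5 + e 3 * e 4 := rfl
lemma d1_2 : d1 2 = -(e 2 * e 5) := rfl
lemma d1_3 : d1 3 = -(e 3 * e 5) := rfl
lemma d1_4 : d1 4 = (2:ℝ) • (e 4 * e 5) := rfl
lemma d1_5 : d1 5 = 0 := rfl

/-- Evaluation against the determinant 6-form. -/
def detf : ∀ i, (Fin 6 → ℝ) [⋀^Fin i]→ₗ[ℝ] ℝ :=
  fun i => if h : i = 6 then h ▸ Matrix.detRowAlternating else 0

set_option maxRecDepth 100000 in
lemma detf_vol : liftAlternating (R := ℝ) detf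
    (e 0 * (e 1 * (e 2 * (e 3 * (e 4 * e 5))))) = 1 := by
  have h : e 0 * (e 1 * (e 2 * (e 3 * (e 4 * e 5)))) =
      ιMulti ℝ 6 (fun k : Fin 6 => Pi.single k 1) := by
    rw [ιMulti_apply]
    simp [e, List.ofFn_succ, mul_assoc]
  rw [h, liftAlternating_apply_ιMulti]
  show Matrix.detRowAlternating _ = 1
  have hm : (Matrix.of fun k : Fin 6 => (Pi.single k 1 : Fin 6 → ℝ)) = (1 : Matrix (Fin 6) (Fin 6) ℝ) := by
    ext i j
    simp [Matrix.one_apply, Pi.single_apply, eq_comm]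
  have := congrArg Matrix.det hm
  rw [Matrix.det_one] at this
  exact this

lemma F_cube : F * F * F = (12:ℝ) • (e 0 * (e 1 * (e 2 * (e 3 * (e 4 * e 5))))) := by
  simp (disch := decide) [F, mul_assoc, e_sq, e_sq', e_swap, e_swap', mul_add, add_mul,
    smul_mul_assoc, mul_smul_comm, smul_smul]
  module

/-- Symplectic half-flat structure on A_{6,54}^{2,1}. -/
theorem stmt11 : dF = 0 ∧ dρ = 0 ∧ F * F * F ≠ 0 ∧ F * ρ = 0 := by
  refine ⟨?_, ?_, ?_, ?_⟩
  · simp (disch := decide) [dF, d2, d1_0, d1_1, d1_2, d1_3, d1_4, d1_5, mul_assoc, e_sq, e_sq', e_swap, e_swap',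
      mul_add, add_mul, sub_mul, mul_sub, smul_mul_assoc, mul_smul_comm, smul_smul]
  · simp (disch := decide) [dρ, d3, d1_0, d1_1, d1_2, d1_3, d1_4, d1_5, mul_assoc, e_sq, e_sq', e_swap, e_swap',
      mul_add, add_mul, sub_mul, mul_sub, smul_mul_assoc, mul_smul_comm, smul_smul]
    module
  · intro h
    rw [F_cube] at h
    have := congrArg (liftAlternating (R := ℝ) detf) h
    rw [map_smul, detf_vol, map_zero, smul_eq_mul, mul_one] at this
    norm_num at this
  · simp (disch := decide) [F, ρ, mul_assoc, e_sq, e_sq', e_swap, e_swap',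
      mul_add, add_mul, sub_mul, mul_sub, smul_mul_assoc, mul_smul_comm, smul_smul]
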